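/- Under the hypotheses on the Bloch-decomposition step B_{Δt}, let P ≥ 1, for each grid point (ℓ,r) let A_{ℓ,r} be a symmetric real P×P matrix, and consider the one-step Bloch decomposition-based stochastic Galerkin map: given ψ : {0,…,P−1}×{0,…,L−1}×{0,…,R−1} → ℂ, first apply B_{Δt} to ψ_p := ψ(p,·,·) for each gPC index p, obtaining ψ', and then for each (ℓ,r) replace the vector (ψ'(p,ℓ,r))_{p=0}^{P−1} ∈ ℂ^P by exp(−i·(Δt/ε)·A_{ℓ,r}) applied to it, where exp is the matrix exponential of the complexification of A_{ℓ,r}, obtaining ψ''. Then ∑_{p=0}^{P−1}∑_{ℓ=0}^{L−1}∑_{r=0}^{R−1} |ψ''(p,ℓ,r)|² = ∑_{p=0}^{P−1}∑_{ℓ=0}^{L−1}∑_{r=0}^{R−1} |ψ(p,ℓ,r)|². In particular the Bloch decomposition-based stochastic Galerkin scheme has the property of weak conservation of mass and is unconditionally stable. -/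

import Mathlib

open Complex Finset Real
open scoped Matrix

/-- One Bloch-decomposition step `B_{Δt}` of the Bloch decomposition-based
time-splitting scheme, on the fully discrete level: `L` quasi-momentum points
`k_ℓ = -1/2 + ℓ/L`, `R` grid points per cell, discrete Bloch eigenfunctions
`φ ℓ m r ≈ φ_m(y_r, k_ℓ)` and band energies `E ℓ m ≈ E_m(k_ℓ)`. -/
noncomputable def blochStep (L R : ℕ) (ε Δt : ℝ)
    (φ : Fin L → Fin R → Fin R → ℂ) (E : Fin L → Fin R → ℝ)
    (ψ : Fin L → Fin R → ℂ) : Fin L → Fin R → ℂ :=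
  let k : Fin L → ℝ := fun ℓ => -(1/2 : ℝ) + (ℓ : ℝ) / L
  -- step 1.1: ψ̃(ℓ,r) = ∑_j ψ(j,r) exp(−2πi k_ℓ j)
  let ψt : Fin L → Fin R → ℂ := fun ℓ r =>
    ∑ j : Fin L, ψ j r * Complex.exp (-(2 * π * Complex.I * (k ℓ) * (j : ℝ)))
  -- step 1.2: C(m,ℓ) = (2π/R) ∑_r ψ̃(ℓ,r) conj(φ_ℓ(m,r))
  let C : Fin R → Fin L → ℂ := fun m ℓ =>
    (2 * (π : ℂ) / R) * ∑ r : Fin R, ψt ℓ r * (starRingEnd ℂ) (φ ℓ m r)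
  -- step 1.3: C'(m,ℓ) = C(m,ℓ) exp(−i E_ℓ(m) Δt / ε)
  let C' : Fin R → Fin L → ℂ := fun m ℓ =>
    C m ℓ * Complex.exp (-(Complex.I * (E ℓ m) * Δt / ε))
  -- step 1.4: ψ̃'(ℓ,r) = ∑_m C'(m,ℓ) φ_ℓ(m,r)
  let ψt' : Fin L → Fin R → ℂ := fun ℓ r => ∑ m : Fin R, C' m ℓ * φ ℓ m r
  -- step 1.5: ψ'(ℓ,r) = (1/L) ∑_j ψ̃'(j,r) exp(2πi k_j ℓ)
  fun ℓ r =>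
    (1 / (L : ℂ)) * ∑ j : Fin L, ψt' j r * Complex.exp (2 * π * Complex.I * (k j) * (ℓ : ℝ))


lemma sum_transform {ι κ : Type*} [Fintype ι] [Fintype κ] [DecidableEq κ]
    (T : ι → κ → ℂ) (c : ℂ)
    (h : ∀ j j' : κ, ∑ i, T i j * (starRingEnd ℂ) (T i j') = if j = j' then c else 0)
    (g : κ → ℂ) :
    ∑ i, (∑ j, g j * T i j) * (starRingEnd ℂ) (∑ j, g j * T i j)
      = c * ∑ j, g j * (starRingEnd ℂ) (g j) := by
  have step : ∀ i, (∑ j, g j * T i j) * (starRingEnd ℂ) (∑ j, g j * T i j)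
      = ∑ j, ∑ j', (g j * (starRingEnd ℂ) (g j')) * (T i j * (starRingEnd ℂ) (T i j')) := by
    intro i
    rw [map_sum, Finset.sum_mul_sum]
    exact Finset.sum_congr rfl fun j _ => Finset.sum_congr rfl fun j' _ => by
      rw [map_mul]; ring
  calc ∑ i, (∑ j, g j * T i j) * (starRingEnd ℂ) (∑ j, g j * T i j)
      = ∑ i, ∑ j, ∑ j', (g j * (starRingEnd ℂ) (g j')) * (T i j * (starRingEnd ℂ) (T i j')) :=
        Finset.sum_congr rfl fun i _ => step i
    _ = ∑ j, ∑ j', (g j * (starRingEnd ℂ) (g j')) * ∑ i, T i j * (starRingEnd ℂ) (T i j') := by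
        rw [Finset.sum_comm]
        refine Finset.sum_congr rfl fun j _ => ?_
        rw [Finset.sum_comm]
        refine Finset.sum_congr rfl fun j' _ => ?_
        rw [Finset.mul_sum]
    _ = ∑ j, (g j * (starRingEnd ℂ) (g j)) * c := by
        refine Finset.sum_congr rfl fun j _ => ?_
        rw [Finset.sum_eq_single j]
        · rw [h j j]; simp
        · intro j' _ hj'
          rw [h j j']
          simp [Ne.symm hj']
        · simp
    _ = c * ∑ j, g j * (starRingEnd ℂ) (g j) := by
        rw [Finset.mul_sum]
        exact Finset.sum_congr rfl fun j _ => by ring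

lemma expSumZero (L : ℕ) (hL : L ≠ 0) (d : ℤ) (hd : d ≠ 0) (hdL : |d| < L) :
    ∑ ℓ : Fin L, Complex.exp (2 * π * Complex.I * ℓ * d / L) = 0 := by
  have hLC : (L : ℂ) ≠ 0 := Nat.cast_ne_zero.mpr hL
  set z : ℂ := Complex.exp (2 * π * Complex.I * d / L) with hz
  have hpow : ∀ ℓ : Fin L, Complex.exp (2 * π * Complex.I * ℓ * d / L) = z ^ (ℓ : ℕ) := by
    intro ℓ
    rw [hz, ← Complex.exp_nat_mul]
    congr 1
    ring
  have hzL : z ^ L = 1 := by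
    rw [hz, ← Complex.exp_nat_mul]
    have h1 : (L : ℂ) * (2 * π * Complex.I * d / L) = d * (2 * π * Complex.I) := by
      field_simp
    rw [h1, Complex.exp_int_mul_two_pi_mul_I]
  have hz1 : z ≠ 1 := by
    intro h
    rw [hz, Complex.exp_eq_one_iff] at h
    obtain ⟨n, hn⟩ := h
    have hπ : (π : ℂ) ≠ 0 := Complex.ofReal_ne_zero.mpr Real.pi_ne_zero
    have hne : (2 * (π:ℂ) * Complex.I) ≠ 0 := by simp [Complex.I_ne_zero, hπ]
    have h2 : (d : ℂ) = (n : ℂ) * L := by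
      field_simp at hn
      have h : (2*(π:ℂ)*Complex.I) * (d:ℂ) = (2*(π:ℂ)*Complex.I) * ((n:ℂ)*L) := by
        linear_combination (2*(π:ℂ)*Complex.I) * hn
      exact mul_left_cancel₀ hne h
    have h3 : d = n * L := by exact_mod_cast h2
    rcases eq_or_ne n 0 with h0 | h0
    · exact hd (by simp [h3, h0])
    · have : (L : ℤ) ≤ |d| := by
        rw [h3, abs_mul]
        have h1n : (1:ℤ) ≤ |n| := Int.one_le_abs h0
        have hLa : |(L:ℤ)| = L := abs_of_nonneg (by positivity)
        nlinarith [abs_nonneg (n:ℤ)]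
      omega
  have hsum : ∑ ℓ : Fin L, Complex.exp (2 * π * Complex.I * ℓ * d / L)
      = ∑ i ∈ Finset.range L, z ^ i := by
    rw [← Fin.sum_univ_eq_sum_range (fun i => z ^ i)]
    exact Finset.sum_congr rfl fun ℓ _ => hpow ℓ
  rw [hsum, geom_sum_eq hz1, hzL]
  simp

lemma expSumDelta (L : ℕ) (hL : L ≠ 0) (j j' : Fin L) :
    ∑ ℓ : Fin L, Complex.exp (2 * π * Complex.I * ℓ * ((j : ℤ) - (j' : ℤ)) / L)
      = if j = j' then (L : ℂ) else 0 := by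
  by_cases h : j = j'
  · subst h
    rw [if_pos rfl]
    have h1 : ∀ ℓ : Fin L, Complex.exp (2 * π * Complex.I * ℓ * ((j : ℤ) - (j : ℤ)) / L) = 1 := by
      intro ℓ
      rw [sub_self, mul_zero, zero_div, Complex.exp_zero]
    rw [Finset.sum_congr rfl fun ℓ _ => h1 ℓ, Finset.sum_const, Finset.card_univ, Fintype.card_fin]
    simp
  · rw [if_neg h]
    have hz := expSumZero L hL ((j : ℤ) - (j' : ℤ)) ?_ ?_
    · push_cast at hz
      exact hz
    · simp only [ne_eq, sub_eq_zero]
      exact fun hc => h (Fin.ext (by exact_mod_cast hc))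
    · have hj := j.isLt
      have hj' := j'.isLt
      rw [abs_sub_lt_iff]
      omega

lemma unitary_mulVec_sum {P : ℕ} (M : Matrix (Fin P) (Fin P) ℂ)
    (hM : Mᴴ * M = 1) (v : Fin P → ℂ) :
    ∑ p, (M.mulVec v) p * (starRingEnd ℂ) ((M.mulVec v) p)
      = ∑ p, v p * (starRingEnd ℂ) (v p) := by
  have h1 : ∀ w : Fin P → ℂ, ∑ p, w p * (starRingEnd ℂ) (w p) = dotProduct w (star w) := by
    intro w; simp [dotProduct]
  rw [h1, h1, Matrix.star_mulVec, dotProduct_comm, Matrix.dotProduct_mulVec,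
    Matrix.vecMul_vecMul, hM, Matrix.vecMul_one, dotProduct_comm]

lemma exp_smul_hermitian_unitary {P : ℕ} (c : ℂ) (hc : (starRingEnd ℂ) c = -c)
    (B : Matrix (Fin P) (Fin P) ℂ) (hB : Bᴴ = B) :
    (NormedSpace.exp (c • B))ᴴ * NormedSpace.exp (c • B) = 1 := by
  rw [← Matrix.exp_conjTranspose]
  have h1 : (c • B)ᴴ = -(c • B) := by
    rw [Matrix.conjTranspose_smul, hB]
    rw [show star c = (starRingEnd ℂ) c from rfl, hc, neg_smul]
  rw [h1, ← Matrix.exp_add_of_commute _ _ ((Commute.refl (c • B)).neg_left), neg_add_cancel,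
    NormedSpace.exp_zero]

noncomputable def bsK (L : ℕ) (ℓ : Fin L) : ℝ := -(1/2 : ℝ) + (ℓ : ℝ) / L

noncomputable def bsS1 (L R : ℕ) (ψ : Fin L → Fin R → ℂ) : Fin L → Fin R → ℂ :=
  fun ℓ r => ∑ j : Fin L, ψ j r * Complex.exp (-(2 * π * Complex.I * (bsK L ℓ) * (j : ℝ)))

noncomputable def bsS2 (L R : ℕ) (φ : Fin L → Fin R → Fin R → ℂ)
    (ψ : Fin L → Fin R → ℂ) : Fin R → Fin L → ℂ :=
  fun m ℓ => (2 * (π : ℂ) / R) * ∑ r : Fin R, bsS1 L R ψ ℓ r * (starRingEnd ℂ) (φ ℓ m r)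

noncomputable def bsS3 (L R : ℕ) (ε Δt : ℝ) (φ : Fin L → Fin R → Fin R → ℂ)
    (E : Fin L → Fin R → ℝ) (ψ : Fin L → Fin R → ℂ) : Fin R → Fin L → ℂ :=
  fun m ℓ => bsS2 L R φ ψ m ℓ * Complex.exp (-(Complex.I * (E ℓ m) * Δt / ε))

noncomputable def bsS4 (L R : ℕ) (ε Δt : ℝ) (φ : Fin L → Fin R → Fin R → ℂ)
    (E : Fin L → Fin R → ℝ) (ψ : Fin L → Fin R → ℂ) : Fin L → Fin R → ℂ :=
  fun ℓ r => ∑ m : Fin R, bsS3 L R ε Δt φ E ψ m ℓ * φ ℓ m r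

lemma blochStep_eq (L R : ℕ) (ε Δt : ℝ) (φ : Fin L → Fin R → Fin R → ℂ)
    (E : Fin L → Fin R → ℝ) (ψ : Fin L → Fin R → ℂ) (ℓ : Fin L) (r : Fin R) :
    blochStep L R ε Δt φ E ψ ℓ r = (1 / (L : ℂ)) * ∑ j : Fin L,
      bsS4 L R ε Δt φ E ψ j r * Complex.exp (2 * π * Complex.I * (bsK L j) * (ℓ : ℝ)) := by
  simp only [blochStep, bsS4, bsS3, bsS2, bsS1, bsK]

lemma blochStep_isometry (L R : ℕ) (hL : L ≠ 0) (hR : R ≠ 0) (ε Δt : ℝ)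
    (φ : Fin L → Fin R → Fin R → ℂ) (E : Fin L → Fin R → ℝ)
    (horth₁ : ∀ j : Fin L, ∀ m n : Fin R,
      ∑ r : Fin R, φ j m r * (starRingEnd ℂ) (φ j n r) =
        if m = n then ((R : ℂ) / (2 * π)) else 0)
    (horth₂ : ∀ j : Fin L, ∀ r s : Fin R,
      ∑ m : Fin R, φ j m r * (starRingEnd ℂ) (φ j m s) =
        if r = s then ((R : ℂ) / (2 * π)) else 0)
    (ψ : Fin L → Fin R → ℂ) :
    ∑ ℓ : Fin L, ∑ r : Fin R,
        blochStep L R ε Δt φ E ψ ℓ r * (starRingEnd ℂ) (blochStep L R ε Δt φ E ψ ℓ r)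
      = ∑ ℓ : Fin L, ∑ r : Fin R, ψ ℓ r * (starRingEnd ℂ) (ψ ℓ r) := by
  have hLC : (L : ℂ) ≠ 0 := Nat.cast_ne_zero.mpr hL
  have hRC : (R : ℂ) ≠ 0 := Nat.cast_ne_zero.mpr hR
  have hπ : (π : ℂ) ≠ 0 := Complex.ofReal_ne_zero.mpr Real.pi_ne_zero
  -- step 1.1
  have key1 : ∀ j j' : Fin L,
      ∑ ℓ : Fin L, Complex.exp (-(2 * π * Complex.I * (bsK L ℓ) * (j : ℝ)))
        * (starRingEnd ℂ) (Complex.exp (-(2 * π * Complex.I * (bsK L ℓ) * (j' : ℝ))))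
      = if j = j' then (L : ℂ) else 0 := by
    intro j j'
    have hterm : ∀ ℓ : Fin L,
        Complex.exp (-(2 * π * Complex.I * (bsK L ℓ) * (j : ℝ)))
          * (starRingEnd ℂ) (Complex.exp (-(2 * π * Complex.I * (bsK L ℓ) * (j' : ℝ))))
        = Complex.exp (π * Complex.I * ((j : ℤ) - (j' : ℤ)))
          * Complex.exp (2 * π * Complex.I * ℓ * ((j' : ℤ) - (j : ℤ)) / L) := by
      intro ℓ
      rw [← Complex.exp_conj, ← Complex.exp_add, ← Complex.exp_add]
      congr 1
      simp only [map_neg, map_mul, Complex.conj_I, Complex.conj_ofReal, map_ofNat, bsK]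
      push_cast
      field_simp
      ring
    rw [Finset.sum_congr rfl fun ℓ _ => hterm ℓ, ← Finset.mul_sum, expSumDelta L hL j' j]
    by_cases h : j = j'
    · subst h
      simp
    · rw [if_neg h, if_neg (Ne.symm h), mul_zero]
  have h1 : ∀ r : Fin R, ∑ ℓ : Fin L, bsS1 L R ψ ℓ r * (starRingEnd ℂ) (bsS1 L R ψ ℓ r)
      = (L : ℂ) * ∑ j : Fin L, ψ j r * (starRingEnd ℂ) (ψ j r) := by
    intro r
    simp only [bsS1]
    exact sum_transform (fun ℓ j : Fin L => Complex.exp (-(2 * π * Complex.I * (bsK L ℓ) * (j : ℝ))))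
      (L : ℂ) key1 (fun j : Fin L => ψ j r)
  -- step 1.2
  have h2 : ∀ ℓ : Fin L,
      ∑ m : Fin R, bsS2 L R φ ψ m ℓ * (starRingEnd ℂ) (bsS2 L R φ ψ m ℓ)
      = (2 * (π : ℂ) / R) * ∑ r : Fin R, bsS1 L R ψ ℓ r * (starRingEnd ℂ) (bsS1 L R ψ ℓ r) := by
    intro ℓ
    have hCform : ∀ m, bsS2 L R φ ψ m ℓ
        = ∑ r : Fin R, bsS1 L R ψ ℓ r * ((2 * (π : ℂ) / R) * (starRingEnd ℂ) (φ ℓ m r)) := by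
      intro m
      simp only [bsS2, Finset.mul_sum]
      exact Finset.sum_congr rfl fun r _ => by ring
    simp only [hCform]
    refine sum_transform (fun m r => (2 * (π : ℂ) / R) * (starRingEnd ℂ) (φ ℓ m r))
      (2 * (π : ℂ) / R) ?_ (fun r => bsS1 L R ψ ℓ r)
    intro r s
    have hterm : ∀ m : Fin R,
        ((2 * (π : ℂ) / R) * (starRingEnd ℂ) (φ ℓ m r))
          * (starRingEnd ℂ) ((2 * (π : ℂ) / R) * (starRingEnd ℂ) (φ ℓ m s))
        = (2 * (π : ℂ) / R) ^ 2 * (φ ℓ m s * (starRingEnd ℂ) (φ ℓ m r)) := by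
      intro m
      simp only [map_mul, map_div₀, map_ofNat, Complex.conj_ofReal, Complex.conj_conj,
        Complex.conj_natCast]
      ring
    rw [Finset.sum_congr rfl fun m _ => hterm m, ← Finset.mul_sum, horth₂ ℓ s r]
    by_cases h : r = s
    · subst h
      rw [if_pos rfl, if_pos rfl]
      field_simp
    · rw [if_neg (Ne.symm h), if_neg h, mul_zero]
  -- step 1.3
  have h3 : ∀ ℓ : Fin L, ∀ m : Fin R,
      bsS3 L R ε Δt φ E ψ m ℓ * (starRingEnd ℂ) (bsS3 L R ε Δt φ E ψ m ℓ)
        = bsS2 L R φ ψ m ℓ * (starRingEnd ℂ) (bsS2 L R φ ψ m ℓ) := by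
    intro ℓ m
    simp only [bsS3, map_mul, ← Complex.exp_conj]
    have hz : (-(Complex.I * ((E ℓ m : ℝ) : ℂ) * (Δt : ℂ) / (ε : ℂ)))
        + (starRingEnd ℂ) (-(Complex.I * ((E ℓ m : ℝ) : ℂ) * (Δt : ℂ) / (ε : ℂ))) = 0 := by
      simp only [map_neg, map_div₀, map_mul, Complex.conj_I, Complex.conj_ofReal]
      ring
    calc bsS2 L R φ ψ m ℓ * Complex.exp (-(Complex.I * (E ℓ m) * Δt / ε))
          * ((starRingEnd ℂ) (bsS2 L R φ ψ m ℓ)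
            * Complex.exp ((starRingEnd ℂ) (-(Complex.I * (E ℓ m) * Δt / ε))))
        = bsS2 L R φ ψ m ℓ * (starRingEnd ℂ) (bsS2 L R φ ψ m ℓ)
          * Complex.exp ((-(Complex.I * (E ℓ m) * Δt / ε))
            + (starRingEnd ℂ) (-(Complex.I * (E ℓ m) * Δt / ε))) := by
          rw [Complex.exp_add]; ring
      _ = bsS2 L R φ ψ m ℓ * (starRingEnd ℂ) (bsS2 L R φ ψ m ℓ) := by
          rw [hz, Complex.exp_zero, mul_one]
  -- step 1.4
  have h4 : ∀ ℓ : Fin L,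
      ∑ r : Fin R, bsS4 L R ε Δt φ E ψ ℓ r * (starRingEnd ℂ) (bsS4 L R ε Δt φ E ψ ℓ r)
      = ((R : ℂ) / (2 * π)) * ∑ m : Fin R,
          bsS3 L R ε Δt φ E ψ m ℓ * (starRingEnd ℂ) (bsS3 L R ε Δt φ E ψ m ℓ) := by
    intro ℓ
    simp only [bsS4]
    exact sum_transform (fun r m => φ ℓ m r) ((R : ℂ) / (2 * π))
      (fun m n => horth₁ ℓ m n) (fun m => bsS3 L R ε Δt φ E ψ m ℓ)
  -- step 1.5
  have key5 : ∀ j j' : Fin L,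
      ∑ ℓ : Fin L, ((1 / (L : ℂ)) * Complex.exp (2 * π * Complex.I * (bsK L j) * (ℓ : ℝ)))
        * (starRingEnd ℂ) ((1 / (L : ℂ)) * Complex.exp (2 * π * Complex.I * (bsK L j') * (ℓ : ℝ)))
      = if j = j' then 1 / (L : ℂ) else 0 := by
    intro j j'
    have hterm : ∀ ℓ : Fin L,
        ((1 / (L : ℂ)) * Complex.exp (2 * π * Complex.I * (bsK L j) * (ℓ : ℝ)))
          * (starRingEnd ℂ) ((1 / (L : ℂ)) * Complex.exp (2 * π * Complex.I * (bsK L j') * (ℓ : ℝ)))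
        = (1 / (L : ℂ)) ^ 2
            * Complex.exp (2 * π * Complex.I * ℓ * ((j : ℤ) - (j' : ℤ)) / L) := by
      intro ℓ
      rw [map_mul, ← Complex.exp_conj]
      have hc1 : (starRingEnd ℂ) (1 / (L : ℂ)) = 1 / (L : ℂ) := by simp
      rw [hc1]
      have hre : ((1 / (L : ℂ)) * Complex.exp (2 * π * Complex.I * (bsK L j) * (ℓ : ℝ)))
          * ((1 / (L : ℂ))
            * Complex.exp ((starRingEnd ℂ) (2 * π * Complex.I * (bsK L j') * (ℓ : ℝ))))
          = (1 / (L : ℂ)) ^ 2 * (Complex.exp (2 * π * Complex.I * (bsK L j) * (ℓ : ℝ))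
            * Complex.exp ((starRingEnd ℂ) (2 * π * Complex.I * (bsK L j') * (ℓ : ℝ)))) := by
        ring
      rw [hre, ← Complex.exp_add]
      congr 2
      simp only [map_mul, Complex.conj_I, Complex.conj_ofReal, map_ofNat, bsK]
      push_cast
      field_simp
      ring
    rw [Finset.sum_congr rfl fun ℓ _ => hterm ℓ, ← Finset.mul_sum, expSumDelta L hL j j']
    by_cases h : j = j'
    · rw [if_pos h, if_pos h]
      field_simp
    · rw [if_neg h, if_neg h, mul_zero]
  have h5 : ∀ r : Fin R,
      ∑ ℓ : Fin L, blochStep L R ε Δt φ E ψ ℓ r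
        * (starRingEnd ℂ) (blochStep L R ε Δt φ E ψ ℓ r)
      = (1 / (L : ℂ)) * ∑ j : Fin L,
          bsS4 L R ε Δt φ E ψ j r * (starRingEnd ℂ) (bsS4 L R ε Δt φ E ψ j r) := by
    intro r
    have hform : ∀ ℓ, blochStep L R ε Δt φ E ψ ℓ r
        = ∑ j : Fin L, bsS4 L R ε Δt φ E ψ j r
            * ((1 / (L : ℂ)) * Complex.exp (2 * π * Complex.I * (bsK L j) * (ℓ : ℝ))) := by
      intro ℓ
      rw [blochStep_eq, Finset.mul_sum]
      exact Finset.sum_congr rfl fun j _ => by ring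
    simp only [hform]
    exact sum_transform
      (fun ℓ j : Fin L => (1 / (L : ℂ)) * Complex.exp (2 * π * Complex.I * (bsK L j) * (ℓ : ℝ)))
      (1 / (L : ℂ)) key5 (fun j : Fin L => bsS4 L R ε Δt φ E ψ j r)
  -- assemble
  calc ∑ ℓ : Fin L, ∑ r : Fin R,
        blochStep L R ε Δt φ E ψ ℓ r * (starRingEnd ℂ) (blochStep L R ε Δt φ E ψ ℓ r)
      = ∑ r : Fin R, ∑ ℓ : Fin L,
        blochStep L R ε Δt φ E ψ ℓ r * (starRingEnd ℂ) (blochStep L R ε Δt φ E ψ ℓ r) :=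
        Finset.sum_comm
    _ = ∑ r : Fin R, (1 / (L : ℂ)) * ∑ j : Fin L,
          bsS4 L R ε Δt φ E ψ j r * (starRingEnd ℂ) (bsS4 L R ε Δt φ E ψ j r) :=
        Finset.sum_congr rfl fun r _ => h5 r
    _ = (1 / (L : ℂ)) * ∑ r : Fin R, ∑ j : Fin L,
          bsS4 L R ε Δt φ E ψ j r * (starRingEnd ℂ) (bsS4 L R ε Δt φ E ψ j r) :=
        (Finset.mul_sum _ _ _).symm
    _ = (1 / (L : ℂ)) * ∑ j : Fin L, ∑ r : Fin R,
          bsS4 L R ε Δt φ E ψ j r * (starRingEnd ℂ) (bsS4 L R ε Δt φ E ψ j r) := by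
        rw [Finset.sum_comm]
    _ = (1 / (L : ℂ)) * ∑ j : Fin L, ((R : ℂ) / (2 * π)) * ∑ m : Fin R,
          bsS3 L R ε Δt φ E ψ m j * (starRingEnd ℂ) (bsS3 L R ε Δt φ E ψ m j) := by
        rw [Finset.sum_congr rfl fun j _ => h4 j]
    _ = (1 / (L : ℂ)) * (((R : ℂ) / (2 * π)) * ∑ j : Fin L, ∑ m : Fin R,
          bsS2 L R φ ψ m j * (starRingEnd ℂ) (bsS2 L R φ ψ m j)) := by
        rw [← Finset.mul_sum]
        congr 2
        exact Finset.sum_congr rfl fun j _ => Finset.sum_congr rfl fun m _ => h3 j m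
    _ = (1 / (L : ℂ)) * (((R : ℂ) / (2 * π)) * ((2 * (π : ℂ) / R) * ∑ j : Fin L,
          ∑ r : Fin R, bsS1 L R ψ j r * (starRingEnd ℂ) (bsS1 L R ψ j r))) := by
        rw [Finset.sum_congr rfl fun j _ => h2 j, ← Finset.mul_sum]
    _ = (1 / (L : ℂ)) * (((R : ℂ) / (2 * π)) * ((2 * (π : ℂ) / R) * ((L : ℂ) *
          ∑ j : Fin L, ∑ r : Fin R, ψ j r * (starRingEnd ℂ) (ψ j r)))) := by
        congr 3
        calc ∑ j : Fin L, ∑ r : Fin R, bsS1 L R ψ j r * (starRingEnd ℂ) (bsS1 L R ψ j r)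
            = ∑ r : Fin R, ∑ j : Fin L, bsS1 L R ψ j r * (starRingEnd ℂ) (bsS1 L R ψ j r) :=
              Finset.sum_comm
          _ = ∑ r : Fin R, (L : ℂ) * ∑ j : Fin L, ψ j r * (starRingEnd ℂ) (ψ j r) :=
              Finset.sum_congr rfl fun r _ => h1 r
          _ = (L : ℂ) * ∑ r : Fin R, ∑ j : Fin L, ψ j r * (starRingEnd ℂ) (ψ j r) :=
              (Finset.mul_sum _ _ _).symm
          _ = (L : ℂ) * ∑ j : Fin L, ∑ r : Fin R, ψ j r * (starRingEnd ℂ) (ψ j r) := by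
              rw [Finset.sum_comm]
    _ = ∑ ℓ : Fin L, ∑ r : Fin R, ψ ℓ r * (starRingEnd ℂ) (ψ ℓ r) := by
        field_simp

theorem BDSG_conserves_mass
    (L R P : ℕ) (hL : 1 ≤ L) (hR : 1 ≤ R) (hP : 1 ≤ P) (ε Δt : ℝ) (hε : 0 < ε)
    (φ : Fin L → Fin R → Fin R → ℂ) (E : Fin L → Fin R → ℝ)
    (horth₁ : ∀ j : Fin L, ∀ m n : Fin R,
      ∑ r : Fin R, φ j m r * (starRingEnd ℂ) (φ j n r) =
        if m = n then ((R : ℂ) / (2 * π)) else 0)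
    (horth₂ : ∀ j : Fin L, ∀ r s : Fin R,
      ∑ m : Fin R, φ j m r * (starRingEnd ℂ) (φ j m s) =
        if r = s then ((R : ℂ) / (2 * π)) else 0)
    -- the Galerkin coupling matrices `A_U(x_{ℓ,r})`, real symmetric
    (A : Fin L → Fin R → Matrix (Fin P) (Fin P) ℝ)
    (hA : ∀ ℓ : Fin L, ∀ r : Fin R, (A ℓ r).IsSymm)
    (ψ : Fin P → Fin L → Fin R → ℂ)
    -- step 1: apply the Bloch-decomposition step to each gPC component
    (ψ' : Fin P → Fin L → Fin R → ℂ)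
    (hψ' : ∀ p : Fin P, ψ' p = blochStep L R ε Δt φ E (ψ p))
    -- step 2: at each grid point, apply exp(−i(Δt/ε)A_{ℓ,r}) to the gPC vector
    (ψ'' : Fin P → Fin L → Fin R → ℂ)
    (hψ'' : ∀ p : Fin P, ∀ ℓ : Fin L, ∀ r : Fin R,
      ψ'' p ℓ r =
        (NormedSpace.exp
            ((-(Complex.I * (Δt / ε))) • (A ℓ r).map (Complex.ofReal))).mulVec
          (fun q => ψ' q ℓ r) p) :
    ∑ p : Fin P, ∑ ℓ : Fin L, ∑ r : Fin R, ‖ψ'' p ℓ r‖ ^ 2 =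
      ∑ p : Fin P, ∑ ℓ : Fin L, ∑ r : Fin R, ‖ψ p ℓ r‖ ^ 2 := by
  have hL0 : L ≠ 0 := by omega
  have hR0 : R ≠ 0 := by omega
  have habs : ∀ z : ℂ, ((‖z‖ ^ 2 : ℝ) : ℂ) = z * (starRingEnd ℂ) z := fun z => by
    rw [Complex.sq_norm, Complex.mul_conj]
  have hcast : ∀ (F : Fin P → Fin L → Fin R → ℂ),
      ((∑ p : Fin P, ∑ ℓ : Fin L, ∑ r : Fin R, ‖F p ℓ r‖ ^ 2 : ℝ) : ℂ)
        = ∑ p : Fin P, ∑ ℓ : Fin L, ∑ r : Fin R, F p ℓ r * (starRingEnd ℂ) (F p ℓ r) := by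
    intro F
    simp only [Complex.ofReal_sum, habs]
  have step2 : ∀ (ℓ : Fin L) (r : Fin R),
      ∑ p : Fin P, ψ'' p ℓ r * (starRingEnd ℂ) (ψ'' p ℓ r)
        = ∑ p : Fin P, ψ' p ℓ r * (starRingEnd ℂ) (ψ' p ℓ r) := by
    intro ℓ r
    have hc : (starRingEnd ℂ) (-(Complex.I * ((Δt : ℂ) / (ε : ℂ))))
        = -(-(Complex.I * ((Δt : ℂ) / (ε : ℂ)))) := by
      simp only [map_neg, map_mul, map_div₀, Complex.conj_I, Complex.conj_ofReal]
      ring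
    have hB : ((A ℓ r).map Complex.ofReal)ᴴ = (A ℓ r).map Complex.ofReal := by
      ext i j
      simp only [Matrix.conjTranspose_apply, Matrix.map_apply]
      rw [show star (((A ℓ r) j i : ℝ) : ℂ) = (((A ℓ r) j i : ℝ) : ℂ) from Complex.conj_ofReal _]
      exact congrArg _ ((hA ℓ r).apply i j)
    have hU := exp_smul_hermitian_unitary (-(Complex.I * ((Δt : ℂ) / (ε : ℂ)))) hc
      ((A ℓ r).map Complex.ofReal) hB
    have hsum := unitary_mulVec_sum _ hU (fun q => ψ' q ℓ r)
    simp only [hψ'']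
    exact hsum
  have swap : ∀ (F : Fin P → Fin L → Fin R → ℂ),
      ∑ p : Fin P, ∑ ℓ : Fin L, ∑ r : Fin R, F p ℓ r
        = ∑ ℓ : Fin L, ∑ r : Fin R, ∑ p : Fin P, F p ℓ r := by
    intro F
    rw [Finset.sum_comm]
    exact Finset.sum_congr rfl fun ℓ _ => Finset.sum_comm
  rw [← Complex.ofReal_inj, hcast ψ'', hcast ψ]
  calc ∑ p : Fin P, ∑ ℓ : Fin L, ∑ r : Fin R, ψ'' p ℓ r * (starRingEnd ℂ) (ψ'' p ℓ r)
      = ∑ ℓ : Fin L, ∑ r : Fin R, ∑ p : Fin P, ψ'' p ℓ r * (starRingEnd ℂ) (ψ'' p ℓ r) :=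
        swap _
    _ = ∑ ℓ : Fin L, ∑ r : Fin R, ∑ p : Fin P, ψ' p ℓ r * (starRingEnd ℂ) (ψ' p ℓ r) :=
        Finset.sum_congr rfl fun ℓ _ => Finset.sum_congr rfl fun r _ => step2 ℓ r
    _ = ∑ p : Fin P, ∑ ℓ : Fin L, ∑ r : Fin R, ψ' p ℓ r * (starRingEnd ℂ) (ψ' p ℓ r) :=
        (swap _).symm
    _ = ∑ p : Fin P, ∑ ℓ : Fin L, ∑ r : Fin R, ψ p ℓ r * (starRingEnd ℂ) (ψ p ℓ r) := by
        refine Finset.sum_congr rfl fun p _ => ?_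
        rw [hψ' p]
        exact blochStep_isometry L R hL0 hR0 ε Δt φ E horth₁ horth₂ (ψ p)
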